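/- Let C0 be an [n,k,d]_q linear code with parity-check matrix H0. Form H from H0 by splitting the columns into ceil(n/r) blocks of size at most r, adding one indicator row per block, and appending one extra column per block (equal to the block's indicator row vector with zero H0-part). Then the code C with parity-check matrix H is a q-ary linear code of length n + ceil(n/r), dimension exactly k, minimum distance at least d, and locality r. -/

import Mathlib

open Finset

/-- `R` (containing `i`) is a recovery set at coordinate `i` for the code `C`. -/
def IsRecoverySet {F : Type*} [Field F] {ι : Type*} [Fintype ι]
    (C : Submodule F (ι → F)) (i : ι) (R : Finset ι) : Prop :=
  i ∈ R ∧ ∀ u ∈ C, ∀ v ∈ C, (∀ j ∈ R, j ≠ i → u j = v j) → u i = v i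

/-- `C` has locality `r`: every coordinate has a recovery set of size at most `r+1`. -/
def HasLocality {F : Type*} [Field F] {ι : Type*} [Fintype ι]
    (C : Submodule F (ι → F)) (r : ℕ) : Prop :=
  ∀ i : ι, ∃ R : Finset ι, R.card ≤ r + 1 ∧ IsRecoverySet C i R

/-- Every nonzero codeword of `C` has Hamming weight at least `d`. -/
def DistAtLeast {F : Type*} [Field F] [DecidableEq F] {ι : Type*} [Fintype ι]
    (C : Submodule F (ι → F)) (d : ℕ) : Prop :=
  ∀ c ∈ C, c ≠ 0 → d ≤ hammingNorm c

/-- `C` has minimum distance exactly `d`. -/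
def IsMinDist {F : Type*} [Field F] [DecidableEq F] {ι : Type*} [Fintype ι]
    (C : Submodule F (ι → F)) (d : ℕ) : Prop :=
  (∃ c ∈ C, c ≠ 0 ∧ hammingNorm c = d) ∧ DistAtLeast C d

/-- The lengthened matrix `H` of Equation (5): columns of `H0` are grouped into `b` consecutive
blocks of size at most `r` (column `j` lies in block `j / r`); on top we add one indicator row
per block (equal to `1` on the columns of that block and on the appended extra column of that
block, `0` elsewhere), and for each block we append one extra column whose `H0`-part is zero. -/
def lengthenMatrix {F : Type*} [Field F] {m n : ℕ} (H0 : Matrix (Fin m) (Fin n) F)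
    (r b : ℕ) : Matrix (Fin b ⊕ Fin m) (Fin n ⊕ Fin b) F :=
  fun x y =>
    match x, y with
    | Sum.inl i, Sum.inl j => if (j : ℕ) / r = (i : ℕ) then 1 else 0
    | Sum.inl i, Sum.inr i' => if i = i' then 1 else 0
    | Sum.inr i, Sum.inl j => H0 i j
    | Sum.inr _, Sum.inr _ => 0


section Aux

variable {F : Type*} [Field F] {m n : ℕ}

lemma lengthen_mem_ker_iff (H0 : Matrix (Fin m) (Fin n) F) (r b : ℕ)
    (c : Fin n ⊕ Fin b → F) :
    c ∈ LinearMap.ker (lengthenMatrix H0 r b).mulVecLin ↔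
    ((fun j => c (Sum.inl j)) ∈ LinearMap.ker H0.mulVecLin ∧
     ∀ i : Fin b, c (Sum.inr i)
        = -∑ j ∈ Finset.univ.filter (fun j : Fin n => (j : ℕ) / r = (i : ℕ)),
            c (Sum.inl j)) := by
  rw [LinearMap.mem_ker, LinearMap.mem_ker, Matrix.mulVecLin_apply, Matrix.mulVecLin_apply,
    funext_iff, funext_iff, Sum.forall]
  have h1 : ∀ i : Fin b, (lengthenMatrix H0 r b).mulVec c (Sum.inl i)
      = (∑ j ∈ Finset.univ.filter (fun j : Fin n => (j : ℕ) / r = (i : ℕ)),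
          c (Sum.inl j)) + c (Sum.inr i) := by
    intro i
    simp [Matrix.mulVec, dotProduct, lengthenMatrix, Fintype.sum_sum_type,
      ite_mul, Finset.sum_ite_eq, Finset.sum_filter]
  have h2 : ∀ x : Fin m, (lengthenMatrix H0 r b).mulVec c (Sum.inr x)
      = H0.mulVec (fun j => c (Sum.inl j)) x := by
    intro x
    simp [Matrix.mulVec, dotProduct, lengthenMatrix, Fintype.sum_sum_type]
  simp only [Pi.zero_apply]
  constructor
  · rintro ⟨ha, hb⟩
    refine ⟨fun x => by rw [← h2 x, hb x], fun i => ?_⟩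
    have hh := ha i
    rw [h1 i] at hh
    linear_combination hh
  · rintro ⟨ha, hb⟩
    refine ⟨fun i => ?_, fun x => by rw [h2 x, ha]⟩
    rw [h1 i, hb i]; ring

def lengthenMap (r b : ℕ) : (Fin n → F) →ₗ[F] (Fin n ⊕ Fin b → F) where
  toFun u := Sum.elim u
    (fun i => -∑ j ∈ Finset.univ.filter (fun j : Fin n => (j : ℕ) / r = (i : ℕ)), u j)
  map_add' u v := by
    funext x
    cases x with
    | inl j => simp
    | inr i => simp [Finset.sum_add_distrib]; ring
  map_smul' a u := by
    funext x
    cases x with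
    | inl j => simp
    | inr i => simp [Finset.mul_sum]

lemma lengthenMap_inj (r b : ℕ) :
    Function.Injective (lengthenMap (F := F) (n := n) r b) := by
  intro u v h
  funext j
  exact congrFun h (Sum.inl j)

lemma lengthen_ker_eq_map (H0 : Matrix (Fin m) (Fin n) F) (r b : ℕ) :
    LinearMap.ker (lengthenMatrix H0 r b).mulVecLin
      = (LinearMap.ker H0.mulVecLin).map (lengthenMap r b) := by
  ext c
  rw [lengthen_mem_ker_iff, Submodule.mem_map]
  constructor
  · rintro ⟨h1, h2⟩
    exact ⟨fun j => c (Sum.inl j), h1, by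
      funext x
      cases x with
      | inl j => rfl
      | inr i => exact (h2 i).symm⟩
  · rintro ⟨u, hu, rfl⟩
    exact ⟨hu, fun i => rfl⟩

lemma block_card_le {n : ℕ} {r : ℕ} (hr : 1 ≤ r) (t : ℕ) :
    (Finset.univ.filter (fun j : Fin n => (j : ℕ) / r = t)).card ≤ r := by
  have := Finset.card_le_card_of_injOn (f := fun j : Fin n => (j : ℕ) % r)
    (s := Finset.univ.filter (fun j : Fin n => (j : ℕ) / r = t))
    (t := Finset.range r)
    (fun j _ => Finset.mem_range.mpr (Nat.mod_lt _ hr))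
    (by
      intro a ha b hb hab
      rw [Finset.mem_coe, Finset.mem_filter] at ha hb
      change (a : ℕ) % r = (b : ℕ) % r at hab
      have ha2 : (a : ℕ) / r = t := ha.2
      have hb2 : (b : ℕ) / r = t := hb.2
      refine Fin.ext ?_
      calc (a : ℕ) = r * ((a : ℕ) / r) + (a : ℕ) % r := (Nat.div_add_mod _ _).symm
        _ = r * ((b : ℕ) / r) + (b : ℕ) % r := by rw [ha2, hb2, hab]
        _ = (b : ℕ) := Nat.div_add_mod _ _)
  simpa using this

end Aux

/-- let `C0` be an `[n,k,d]_q` linear code with parity-check matrix `H0`, and let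
`H` be the lengthened matrix obtained by splitting the columns of `H0` into `⌈n/r⌉` blocks of
size at most `r`, adding one indicator row per block and appending one extra column per block.
Then the code `C` with parity-check matrix `H` is a `q`-ary linear code of length `n + ⌈n/r⌉`,
dimension exactly `k`, minimum distance at least `d`, and locality `r`. -/


theorem lengthened_code_params {q n k d r b p : ℕ}
    {F : Type*} [Field F] [Fintype F] [DecidableEq F] (hq : Fintype.card F = q)
    (hr : 1 ≤ r) (hb : b = (n + r - 1) / r)
    (H0 : Matrix (Fin p) (Fin n) F)
    (hk : Module.finrank F (LinearMap.ker H0.mulVecLin) = k)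
    (hd : IsMinDist (LinearMap.ker H0.mulVecLin) d) :
    Module.finrank F (LinearMap.ker (lengthenMatrix H0 r b).mulVecLin) = k ∧
    DistAtLeast (LinearMap.ker (lengthenMatrix H0 r b).mulVecLin) d ∧
    HasLocality (LinearMap.ker (lengthenMatrix H0 r b).mulVecLin) r := by
  refine ⟨?_, ?_, ?_⟩
  · -- dimension
    rw [lengthen_ker_eq_map]
    rw [← (Submodule.equivMapOfInjective _ (lengthenMap_inj r b) _).finrank_eq]
    exact hk
  · -- distance
    intro c hc hcne
    rw [lengthen_mem_ker_iff] at hc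
    set u : Fin n → F := fun j => c (Sum.inl j) with hu
    have hune : u ≠ 0 := by
      intro h0
      apply hcne
      funext x
      cases x with
      | inl j => exact congrFun h0 j
      | inr i =>
        rw [hc.2 i]
        simp only [Pi.zero_apply]
        rw [Finset.sum_congr rfl (fun j _ => congrFun h0 j)]
        simp
    have hdu : d ≤ hammingNorm u := hd.2 u hc.1 hune
    refine hdu.trans ?_
    unfold hammingNorm
    refine Finset.card_le_card_of_injOn Sum.inl ?_ ?_
    · intro j hj
      simp only [Finset.mem_coe, Finset.mem_filter, Finset.mem_univ, true_and] at hj ⊢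
      exact hj
    · intro a _ b _ hab
      exact Sum.inl.inj hab
  · -- locality
    intro x
    cases x with
    | inl j =>
      have hjn : (j : ℕ) < n := j.2
      have hjb : (j : ℕ) / r < b := by
        have h2 : n + r - 1 = (n - 1) + r := by omega
        rw [hb, h2, Nat.add_div_right _ (by omega)]
        have : (j : ℕ) / r ≤ (n - 1) / r := Nat.div_le_div_right (by omega)
        omega
      set i0 : Fin b := ⟨(j : ℕ) / r, hjb⟩ with hi0
      set S : Finset (Fin n) :=
        Finset.univ.filter (fun j' : Fin n => (j' : ℕ) / r = (i0 : ℕ)) with hS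
      have hjS : j ∈ S := Finset.mem_filter.mpr ⟨Finset.mem_univ _, rfl⟩
      refine ⟨S.image Sum.inl ∪ {Sum.inr i0}, ?_, ?_, ?_⟩
      · calc (S.image Sum.inl ∪ {Sum.inr i0}).card
            ≤ (S.image Sum.inl).card + 1 := by
              exact (Finset.card_union_le (S.image Sum.inl) {Sum.inr i0}).trans (by simp only [Finset.card_singleton]; exact le_rfl)
          _ ≤ S.card + 1 := by
              exact Nat.add_le_add_right Finset.card_image_le 1
          _ ≤ r + 1 := by
              exact Nat.add_le_add_right (by rw [hS]; exact block_card_le hr _) 1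
      · exact Finset.mem_union_left _ (Finset.mem_image_of_mem _ hjS)
      · intro u hu v hv hagree
        rw [lengthen_mem_ker_iff] at hu hv
        have hrr : u (Sum.inr i0) = v (Sum.inr i0) :=
          hagree _ (Finset.mem_union_right _ (Finset.mem_singleton_self _)) (by simp)
        have hsum : ∑ j' ∈ S, u (Sum.inl j') = ∑ j' ∈ S, v (Sum.inl j') := by
          have h := hrr
          rw [hu.2 i0, hv.2 i0] at h
          exact neg_injective h
        rw [← Finset.add_sum_erase S _ hjS, ← Finset.add_sum_erase S _ hjS] at hsum
        have herase : ∑ j' ∈ S.erase j, u (Sum.inl j')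
            = ∑ j' ∈ S.erase j, v (Sum.inl j') := by
          refine Finset.sum_congr rfl fun j' hj' => ?_
          refine hagree _ (Finset.mem_union_left _
            (Finset.mem_image_of_mem _ (Finset.mem_of_mem_erase hj'))) ?_
          simp only [ne_eq, Sum.inl.injEq]
          exact Finset.ne_of_mem_erase hj'
        rw [herase] at hsum
        exact add_right_cancel hsum
    | inr i =>
      set S : Finset (Fin n) :=
        Finset.univ.filter (fun j' : Fin n => (j' : ℕ) / r = (i : ℕ)) with hS
      refine ⟨S.image Sum.inl ∪ {Sum.inr i}, ?_, ?_, ?_⟩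
      · calc (S.image Sum.inl ∪ {Sum.inr i}).card
            ≤ (S.image Sum.inl).card + 1 := by
              exact (Finset.card_union_le (S.image Sum.inl) {Sum.inr i}).trans (by simp only [Finset.card_singleton]; exact le_rfl)
          _ ≤ S.card + 1 := by
              exact Nat.add_le_add_right Finset.card_image_le 1
          _ ≤ r + 1 := by
              exact Nat.add_le_add_right (by rw [hS]; exact block_card_le hr _) 1
      · exact Finset.mem_union_right _ (Finset.mem_singleton_self _)
      · intro u hu v hv hagree
        rw [lengthen_mem_ker_iff] at hu hv
        rw [hu.2 i, hv.2 i]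
        congr 1
        refine Finset.sum_congr rfl fun j' hj' => ?_
        exact hagree _ (Finset.mem_union_left _ (Finset.mem_image_of_mem _ hj')) (by simp)
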